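/- Let $v$ be a positive integer and $q$ an integer. Then the $v$-th cyclotomic polynomial $\Phi_v(X)$ divides the polynomial $(X-1)(X^2-1)\cdots(X^{v-1}-1) - (-1)^{v-1} v$ in $\mathbb{Z}[X]$. -/

import Mathlib

open Polynomial in
theorem stmt_3 (v : ℕ) (hv : 0 < v) :
    cyclotomic v ℤ ∣
      (∏ i ∈ Finset.range (v - 1), ((X : ℤ[X]) ^ (i + 1) - 1) - C ((-1) ^ (v - 1) * (v : ℤ))) := by
  obtain ⟨n, rfl⟩ : ∃ n, v = n + 1 := ⟨v - 1, (Nat.succ_pred_eq_of_pos hv).symm⟩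
  obtain ⟨ζ, hζ⟩ : ∃ ζ : ℂ, IsPrimitiveRoot ζ (n + 1) :=
    ⟨_, Complex.isPrimitiveRoot_exp (n + 1) (Nat.succ_ne_zero n)⟩
  rw [cyclotomic_eq_minpoly hζ hv]
  refine minpoly.isIntegrallyClosed_dvd (hζ.isIntegral hv) ?_
  have hprod := hζ.prod_pow_sub_one_eq_order
  have key : ∏ k ∈ Finset.range n, (ζ ^ (k + 1) - 1) = (-1) ^ n * (n + 1 : ℂ) := by
    have h2 : ((-1 : ℂ) ^ n) * ((-1) ^ n * ∏ k ∈ Finset.range n, (ζ ^ (k + 1) - 1))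
        = (-1) ^ n * (n + 1 : ℂ) := by rw [hprod]
    rw [← mul_assoc, ← pow_add, ← two_mul, pow_mul, neg_one_sq, one_pow, one_mul] at h2
    exact h2
  simp only [Nat.add_sub_cancel, map_sub, map_prod, map_pow, map_one, aeval_X, aeval_C]
  rw [key]
  push_cast
  ring
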